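/- For every integer n ≥ 2 and every real number p, Σ_{A ⊆ {1,…,n−1}, n ∉ ⟨A⟩} p^{|A|}(1−p)^{n−1−|A|} = (1−p)^{⌊n/2⌋} · Σ_{i ≥ 0} h_{n,i} p^{i}, where the sum on the left runs over all subsets A of {1,…,n−1} such that n is not in the submonoid generated by A (the sum on the right has only finitely many nonzero terms). In particular, for p ∈ [0,1], the probability a_n(p) that n does not lie in the semigroup generated by a random subset of {1,…,n−1} (each element included independently with probability p) equals (1−p)^{⌊n/2⌋} h_n(p), where h_n(p) = Σ_i h_{n,i} p^i. -/

import Mathlib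

open Filter Topology
open scoped Classical BigOperators

/-- The set of gaps of a numerical semigroup `S ⊆ ℕ`. -/
def gapSet (S : AddSubmonoid ℕ) : Set ℕ := {n : ℕ | n ∉ S}

/-- `S` is cofinite if its set of gaps is finite. -/
def IsCofinite (S : AddSubmonoid ℕ) : Prop := (gapSet S).Finite

/-- The minimal generators of `S`: nonzero elements of `S` that are not the
sum of two nonzero elements of `S`. -/
def minGens (S : AddSubmonoid ℕ) : Set ℕ :=
  {s : ℕ | s ∈ S ∧ s ≠ 0 ∧ ¬ ∃ a ∈ S, ∃ b ∈ S, a ≠ 0 ∧ b ≠ 0 ∧ s = a + b}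

/-- The embedding dimension `e(S)`: the number of minimal generators of `S`. -/
noncomputable def embDim (S : AddSubmonoid ℕ) : ℕ := (minGens S).ncard

/-- The genus `g(S)`: the number of gaps of `S` (junk value `0` if `S` is not cofinite). -/
noncomputable def genus (S : AddSubmonoid ℕ) : ℕ := (gapSet S).ncard

/-- The Frobenius number `F(S)`: the largest gap of `S`
(junk value `0` if `S` is not cofinite or `S = ℕ`). -/
noncomputable def frob (S : AddSubmonoid ℕ) : ℕ := sSup (gapSet S)

/-- A cofinite numerical semigroup `S ≠ ℕ` is irreducible if it is maximal with
respect to inclusion among numerical semigroups with Frobenius number `F(S)`. -/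
def IsIrred (S : AddSubmonoid ℕ) : Prop :=
  IsCofinite S ∧ S ≠ ⊤ ∧
    ∀ T : AddSubmonoid ℕ, S ≤ T → frob T = frob S → T = S

/-- The number of gaps of `S` that are at most `M`. -/
noncomputable def gapsUpTo (S : AddSubmonoid ℕ) (M : ℕ) : ℕ :=
  {x : ℕ | x ∉ S ∧ x ≤ M}.ncard

/-- The probability weight of a generating set `B ⊆ {1, …, M}` in the ER-type
model `S(M, p)`. -/
noncomputable def wt (p : ℝ) (M : ℕ) (B : Finset ℕ) : ℝ :=
  p ^ B.card * (1 - p) ^ (M - B.card)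

/-- The probability in the ER-type model `S(M, p)` that the random numerical
semigroup `𝒮 = ⟨𝒜⟩` lies in the event `E`. -/
noncomputable def probEvent (M : ℕ) (p : ℝ) (E : Set (AddSubmonoid ℕ)) : ℝ :=
  ∑ B ∈ (Finset.Icc 1 M).powerset,
    if AddSubmonoid.closure (B : Set ℕ) ∈ E then wt p M B else 0

/-- The expectation in the ER-type model `S(M, p)` of an invariant `X` of the
random numerical semigroup `𝒮 = ⟨𝒜⟩`. -/
noncomputable def expectVal (M : ℕ) (p : ℝ) (X : AddSubmonoid ℕ → ℕ) : ℝ :=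
  ∑ B ∈ (Finset.Icc 1 M).powerset,
    (X (AddSubmonoid.closure (B : Set ℕ)) : ℝ) * wt p M B

/-- `h_{n,i}`: the number of numerical semigroups `T` with `n ∉ T`, embedding
dimension `i`, and all minimal generators strictly less than `n/2`. -/
noncomputable def hvec (n i : ℕ) : ℕ :=
  {T : AddSubmonoid ℕ | n ∉ T ∧ embDim T = i ∧ ∀ a ∈ minGens T, 2 * a < n}.ncard

/-- `a_n(p)`: the probability that `n` is not in the semigroup generated by a
random subset of `{1, …, n-1}` chosen with inclusion probability `p`. -/
noncomputable def anp (n : ℕ) (p : ℝ) : ℝ :=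
  ∑ A ∈ (Finset.Icc 1 (n - 1)).powerset,
    if n ∉ AddSubmonoid.closure (A : Set ℕ) then
      p ^ A.card * (1 - p) ^ (n - 1 - A.card) else 0

private lemma multiset_sum_ne_zero {m : Multiset ℕ} (hm : m ≠ 0) (h : ∀ y ∈ m, y ≠ 0) :
    m.sum ≠ 0 := by
  obtain ⟨a, ha⟩ := Multiset.exists_mem_of_ne_zero hm
  have := Multiset.single_le_sum (fun x _ => Nat.zero_le x) a ha
  have := h a ha
  omega

private lemma mem_closure_iff_multiset {s : Set ℕ} {x : ℕ} :
    x ∈ AddSubmonoid.closure s ↔ ∃ m : Multiset ℕ, (∀ y ∈ m, y ∈ s) ∧ m.sum = x := by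
  constructor
  · exact AddSubmonoid.exists_multiset_of_mem_closure
  · rintro ⟨m, hm, rfl⟩
    exact AddSubmonoid.multiset_sum_mem _ _ (fun y hy => AddSubmonoid.subset_closure (hm y hy))

private lemma closure_cases {s : Set ℕ} (h0 : 0 ∉ s) {x : ℕ}
    (hx : x ∈ AddSubmonoid.closure s) (hx0 : x ≠ 0) :
    x ∈ s ∨ ∃ a ∈ AddSubmonoid.closure s, ∃ b ∈ AddSubmonoid.closure s,
      a ≠ 0 ∧ b ≠ 0 ∧ x = a + b := by
  obtain ⟨m, hm, rfl⟩ := AddSubmonoid.exists_multiset_of_mem_closure hx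
  rcases eq_or_ne m 0 with rfl | hm0
  · simp at hx0
  obtain ⟨a, ha⟩ := Multiset.exists_mem_of_ne_zero hm0
  obtain ⟨m', rfl⟩ := Multiset.exists_cons_of_mem ha
  rcases eq_or_ne m' 0 with rfl | hm'0
  · left; simpa using hm a (by simp)
  · right
    refine ⟨a, AddSubmonoid.subset_closure (hm a (by simp)), m'.sum,
      AddSubmonoid.multiset_sum_mem _ _ (fun y hy => AddSubmonoid.subset_closure (hm y (by simp [hy]))), ?_, ?_, by simp⟩
    · intro h; exact h0 (h ▸ hm a (by simp))
    · exact multiset_sum_ne_zero hm'0 (fun y hy h => h0 (h ▸ hm y (by simp [hy])))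

private lemma mem_closure_minGens (T : AddSubmonoid ℕ) :
    ∀ t ∈ T, t ∈ AddSubmonoid.closure (minGens T) := by
  intro t
  induction t using Nat.strong_induction_on with
  | _ t ih =>
    intro ht
    rcases eq_or_ne t 0 with rfl | h0
    · exact zero_mem _
    by_cases hmin : t ∈ minGens T
    · exact AddSubmonoid.subset_closure hmin
    · have hd : ∃ a ∈ T, ∃ b ∈ T, a ≠ 0 ∧ b ≠ 0 ∧ t = a + b := by
        by_contra hc
        exact hmin ⟨ht, h0, hc⟩
      obtain ⟨a, ha, b, hb, ha0, hb0, rfl⟩ := hd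
      exact add_mem (ih a (by omega) ha) (ih b (by omega) hb)

private lemma closure_minGens (T : AddSubmonoid ℕ) :
    AddSubmonoid.closure (minGens T) = T := by
  refine le_antisymm (AddSubmonoid.closure_le.2 (fun a ha => ha.1)) (fun t ht => mem_closure_minGens T t ht)

/-- characterization of minGens of a closure of a finset of positive naturals -/
private lemma minGens_closure_finset {s : Finset ℕ} (h0 : 0 ∉ s) :
    minGens (AddSubmonoid.closure (s : Set ℕ))
      = {a : ℕ | a ∈ s ∧ a ∉ AddSubmonoid.closure ((s.erase a : Finset ℕ) : Set ℕ)} := by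
  ext a
  constructor
  · rintro ⟨hmem, ha0, hnd⟩
    have has : a ∈ s := by
      rcases closure_cases (by exact_mod_cast h0) hmem ha0 with h | ⟨u, hu, v, hv, hu0, hv0, rfl⟩
      · exact_mod_cast h
      · exact absurd ⟨u, hu, v, hv, hu0, hv0, rfl⟩ hnd
    refine ⟨has, fun hcl => ?_⟩
    obtain ⟨m, hm, hsum⟩ := AddSubmonoid.exists_multiset_of_mem_closure hcl
    rcases eq_or_ne m 0 with rfl | hm0
    · simp at hsum; omega
    obtain ⟨y, hy⟩ := Multiset.exists_mem_of_ne_zero hm0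
    obtain ⟨m', rfl⟩ := Multiset.exists_cons_of_mem hy
    have hys : y ∈ s.erase a := by exact_mod_cast hm y (by simp)
    rcases eq_or_ne m' 0 with rfl | hm'0
    · simp at hsum
      exact (Finset.ne_of_mem_erase hys) hsum
    · refine hnd ⟨y, AddSubmonoid.subset_closure (Finset.mem_coe.2 (Finset.mem_of_mem_erase hys)), m'.sum,
        AddSubmonoid.multiset_sum_mem _ _ (fun z hz => AddSubmonoid.subset_closure
          (Finset.mem_coe.2 (Finset.mem_of_mem_erase (by exact_mod_cast hm z (by simp [hz]))))), ?_, ?_, ?_⟩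
      · intro h; subst h; exact h0 (Finset.mem_of_mem_erase hys)
      · refine multiset_sum_ne_zero hm'0 (fun z hz h => ?_)
        subst h; exact h0 (Finset.mem_of_mem_erase (by exact_mod_cast hm 0 (by simp [hz])))
      · simp at hsum; omega
  · rintro ⟨has, hnot⟩
    have ha0 : a ≠ 0 := fun h => h0 (h ▸ has)
    refine ⟨AddSubmonoid.subset_closure has, ha0, ?_⟩
    rintro ⟨u, hu, v, hv, hu0, hv0, huv⟩
    obtain ⟨mu, hmu, hmusum⟩ := AddSubmonoid.exists_multiset_of_mem_closure hu
    obtain ⟨mv, hmv, hmvsum⟩ := AddSubmonoid.exists_multiset_of_mem_closure hv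
    have hsum : (mu + mv).sum = a := by rw [Multiset.sum_add]; omega
    have hmem : ∀ z ∈ mu + mv, z ∈ s := by
      intro z hz
      rcases Multiset.mem_add.1 hz with h | h
      · exact_mod_cast hmu z h
      · exact_mod_cast hmv z h
    have hne : ∀ z ∈ mu + mv, z ≠ a := by
      intro z hz hza
      obtain ⟨m', hm'⟩ := Multiset.exists_cons_of_mem hz
      have hmu0 : mu ≠ 0 := fun h' => by simp [h'] at hmusum; omega
      have hmv0 : mv ≠ 0 := fun h' => by simp [h'] at hmvsum; omega
      have hcard2 : 2 ≤ Multiset.card (mu + mv) := by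
        rw [Multiset.card_add]
        have := Multiset.card_pos.2 hmu0
        have := Multiset.card_pos.2 hmv0
        omega
      have hm'0 : m' ≠ 0 := by
        intro h
        rw [hm', h] at hcard2
        simp at hcard2
      have hsum' : (mu + mv).sum = z + m'.sum := by rw [hm', Multiset.sum_cons]
      have hpos : m'.sum ≠ 0 := by
        refine multiset_sum_ne_zero hm'0 (fun y hy h => ?_)
        have hy' : y ∈ mu + mv := by rw [hm']; simp [hy]
        exact h0 (h ▸ hmem y hy')
      omega
    apply hnot
    have key : (mu + mv).sum ∈ AddSubmonoid.closure ((s.erase a : Finset ℕ) : Set ℕ) :=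
      AddSubmonoid.multiset_sum_mem _ _ (fun z hz => AddSubmonoid.subset_closure
        (by exact_mod_cast Finset.mem_erase.2 ⟨hne z hz, hmem z hz⟩))
    rwa [hsum] at key

private lemma memA {n : ℕ} (hn : 2 ≤ n) {A : Finset ℕ} (hA : A ⊆ Finset.Icc 1 (n-1)) :
    n ∈ AddSubmonoid.closure (A : Set ℕ) ↔
      n ∈ AddSubmonoid.closure ((A.filter (fun a => 2*a < n) : Finset ℕ) : Set ℕ) ∨
      ∃ a ∈ A, 2*a = n ∨ (n < 2*a ∧
        (n - a) ∈ AddSubmonoid.closure ((A.filter (fun a => 2*a < n) : Finset ℕ) : Set ℕ)) := by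
  constructor
  · intro h
    obtain ⟨m, hm, hsum⟩ := AddSubmonoid.exists_multiset_of_mem_closure h
    set ms := m.filter (fun a => 2*a < n) with hms
    set ml := m.filter (fun a => ¬ 2*a < n) with hml
    have hsplit : ms.sum + ml.sum = n := by
      rw [hms, hml, Multiset.sum_filter_add_sum_filter_not, hsum]
    have hsmem : ms.sum ∈ AddSubmonoid.closure ((A.filter (fun a => 2*a < n) : Finset ℕ) : Set ℕ) := by
      refine AddSubmonoid.multiset_sum_mem _ _ (fun y hy => AddSubmonoid.subset_closure ?_)
      rw [hms] at hy
      obtain ⟨hy1, hy2⟩ := Multiset.mem_filter.1 hy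
      simp only [Finset.coe_filter, Set.mem_setOf_eq]
      exact ⟨by exact_mod_cast hm y hy1, hy2⟩
    rcases eq_or_ne ml 0 with h0 | hml0
    · left
      rw [h0] at hsplit
      have heq : ms.sum = n := by simpa using hsplit
      rwa [heq] at hsmem
    obtain ⟨a, ha⟩ := Multiset.exists_mem_of_ne_zero hml0
    obtain ⟨m', hm'⟩ := Multiset.exists_cons_of_mem ha
    have haA : a ∈ A := by exact_mod_cast hm a (Multiset.mem_of_mem_filter ha)
    have han : ¬ 2*a < n := (Multiset.mem_filter.1 ha).2
    rcases eq_or_ne m' 0 with h0 | hm'0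
    · -- exactly one large element
      right
      refine ⟨a, haA, ?_⟩
      have : ml.sum = a := by rw [hm', h0]; simp
      rcases eq_or_lt_of_le (not_lt.1 han) with heq | hlt
      · exact Or.inl heq.symm
      · refine Or.inr ⟨hlt, ?_⟩
        have : n - a = ms.sum := by omega
        rwa [this]
    · -- at least two large elements
      obtain ⟨b, hb⟩ := Multiset.exists_mem_of_ne_zero hm'0
      have hbl : b ∈ ml := by rw [hm']; simp [hb]
      have hbn : ¬ 2*b < n := (Multiset.mem_filter.1 hbl).2
      have hble : b ≤ m'.sum := Multiset.single_le_sum (fun x _ => Nat.zero_le x) b hb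
      have : ml.sum = a + m'.sum := by rw [hm', Multiset.sum_cons]
      have h2an : 2*a = n := by omega
      exact Or.inr ⟨a, haA, Or.inl h2an⟩
  · intro h
    have hsub : AddSubmonoid.closure ((A.filter (fun a => 2*a < n) : Finset ℕ) : Set ℕ)
        ≤ AddSubmonoid.closure (A : Set ℕ) := by
      apply AddSubmonoid.closure_mono
      exact_mod_cast Finset.filter_subset _ _
    rcases h with h | ⟨a, haA, h⟩
    · exact hsub h
    have haC : a ∈ AddSubmonoid.closure (A : Set ℕ) := AddSubmonoid.subset_closure haA
    have hale : a ≤ n - 1 := (Finset.mem_Icc.1 (hA haA)).2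
    rcases h with h | ⟨_, h⟩
    · have : n = a + a := by omega
      rw [this]; exact add_mem haC haC
    · have : n = a + (n - a) := by omega
      rw [this]; exact add_mem haC (hsub h)

private def smF (n : ℕ) : Finset ℕ := (Finset.Icc 1 (n-1)).filter (fun a => 2*a < n)
private def lgF (n : ℕ) : Finset ℕ := (Finset.Icc 1 (n-1)).filter (fun a => ¬ 2*a < n)
private noncomputable def redF (n : ℕ) (A : Finset ℕ) : Finset ℕ :=
  (A.filter (fun a => 2*a < n)).filter
    (fun a => a ∉ AddSubmonoid.closure (((A.filter (fun b => 2*b < n)).erase a : Finset ℕ) : Set ℕ))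
private noncomputable def gsetF (n : ℕ) : Finset (Finset ℕ) :=
  (smF n).powerset.filter
    (fun G => ∀ a ∈ G, a ∉ AddSubmonoid.closure ((G.erase a : Finset ℕ) : Set ℕ))
private noncomputable def freeF (n : ℕ) (G : Finset ℕ) : Finset ℕ :=
  ((smF n).filter (fun a => a ∈ AddSubmonoid.closure (G : Set ℕ) ∧ a ∉ G)) ∪
  ((lgF n).filter (fun a => n < 2*a ∧ (n - a) ∉ AddSubmonoid.closure (G : Set ℕ)))

private lemma zero_not_mem_of_subset_Icc {n : ℕ} {A : Finset ℕ}
    (hA : A ⊆ Finset.Icc 1 (n-1)) : 0 ∉ A := by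
  intro h
  have := hA h
  simp at this

private lemma smF_subset_Icc {n : ℕ} : smF n ⊆ Finset.Icc 1 (n-1) := Finset.filter_subset _ _
private lemma lgF_subset_Icc {n : ℕ} : lgF n ⊆ Finset.Icc 1 (n-1) := Finset.filter_subset _ _

private lemma filter_minGens {s : Finset ℕ} (h0 : 0 ∉ s) :
    ((s.filter (fun a => a ∉ AddSubmonoid.closure ((s.erase a : Finset ℕ) : Set ℕ)) : Finset ℕ) : Set ℕ)
      = minGens (AddSubmonoid.closure (s : Set ℕ)) := by
  rw [minGens_closure_finset h0]
  ext a
  simp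

private lemma closure_filter {s : Finset ℕ} (h0 : 0 ∉ s) :
    AddSubmonoid.closure
      ((s.filter (fun a => a ∉ AddSubmonoid.closure ((s.erase a : Finset ℕ) : Set ℕ)) : Finset ℕ) : Set ℕ)
      = AddSubmonoid.closure (s : Set ℕ) := by
  rw [filter_minGens h0, closure_minGens]

private lemma gsetF_subset {n : ℕ} {G : Finset ℕ} (hG : G ∈ gsetF n) : G ⊆ smF n :=
  Finset.mem_powerset.1 (Finset.mem_filter.1 hG).1

private lemma gsetF_minGens {n : ℕ} {G : Finset ℕ} (hG : G ∈ gsetF n) :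
    minGens (AddSubmonoid.closure (G : Set ℕ)) = ↑G := by
  have h0 : 0 ∉ G := zero_not_mem_of_subset_Icc ((gsetF_subset hG).trans smF_subset_Icc)
  have hmin := (Finset.mem_filter.1 hG).2
  have : G.filter (fun a => a ∉ AddSubmonoid.closure ((G.erase a : Finset ℕ) : Set ℕ)) = G :=
    Finset.filter_true_of_mem hmin
  rw [← filter_minGens h0, this]

private lemma redF_subset {n : ℕ} (A : Finset ℕ) : redF n A ⊆ A.filter (fun a => 2*a < n) :=
  Finset.filter_subset _ _

private lemma redF_closure {n : ℕ} {A : Finset ℕ} (hA : A ⊆ Finset.Icc 1 (n-1)) :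
    AddSubmonoid.closure ((redF n A : Finset ℕ) : Set ℕ)
      = AddSubmonoid.closure ((A.filter (fun a => 2*a < n) : Finset ℕ) : Set ℕ) := by
  have h0 : 0 ∉ A.filter (fun a => 2*a < n) :=
    fun h => zero_not_mem_of_subset_Icc hA (Finset.mem_of_mem_filter _ h)
  exact closure_filter h0

private lemma redF_mem_gsetF {n : ℕ} {A : Finset ℕ} (hA : A ⊆ Finset.Icc 1 (n-1)) :
    redF n A ∈ gsetF n := by
  refine Finset.mem_filter.2 ⟨Finset.mem_powerset.2 ?_, ?_⟩
  · intro a ha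
    have ha' := redF_subset A ha
    obtain ⟨h1, h2⟩ := Finset.mem_filter.1 ha'
    exact Finset.mem_filter.2 ⟨hA h1, h2⟩
  · intro a ha hcl
    obtain ⟨ha', hna⟩ := Finset.mem_filter.1 ha
    apply hna
    refine AddSubmonoid.closure_mono ?_ hcl
    intro x hx
    simp only [Finset.coe_erase, Set.mem_diff, Finset.mem_coe, Set.mem_singleton_iff] at hx ⊢
    exact ⟨redF_subset A hx.1, hx.2⟩

private lemma redF_eq_iff {n : ℕ} {A G : Finset ℕ} (hA : A ⊆ Finset.Icc 1 (n-1))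
    (hG : G ∈ gsetF n) :
    redF n A = G ↔ AddSubmonoid.closure ((A.filter (fun a => 2*a < n) : Finset ℕ) : Set ℕ)
      = AddSubmonoid.closure ((G : Finset ℕ) : Set ℕ) := by
  constructor
  · intro h
    rw [← redF_closure hA, h]
  · intro h
    have h0 : 0 ∉ A.filter (fun a => 2*a < n) :=
      fun hx => zero_not_mem_of_subset_Icc hA (Finset.mem_of_mem_filter _ hx)
    apply Finset.coe_injective
    calc ((redF n A : Finset ℕ) : Set ℕ)
        = minGens (AddSubmonoid.closure ((A.filter (fun a => 2*a < n) : Finset ℕ) : Set ℕ)) :=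
          filter_minGens h0
      _ = minGens (AddSubmonoid.closure ((G : Finset ℕ) : Set ℕ)) := by rw [h]
      _ = ↑G := gsetF_minGens hG

private lemma smF_card {n : ℕ} (hn : 2 ≤ n) : (smF n).card = (n-1)/2 := by
  have : smF n = Finset.Icc 1 ((n-1)/2) := by
    ext a
    simp only [smF, Finset.mem_filter, Finset.mem_Icc]
    omega
  rw [this, Nat.card_Icc]
  omega

private lemma card_free {n : ℕ} (hn : 2 ≤ n) {G : Finset ℕ} (hG : G ∈ gsetF n) :
    G.card + (freeF n G).card = (n-1)/2 := by
  have hGsm := gsetF_subset hG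
  set T := AddSubmonoid.closure (G : Set ℕ) with hT
  have hGT : ∀ a ∈ G, a ∈ T := fun a ha => AddSubmonoid.subset_closure ha
  have hdisj : Disjoint ((smF n).filter (fun a => a ∈ T ∧ a ∉ G))
      ((lgF n).filter (fun a => n < 2*a ∧ (n - a) ∉ T)) := by
    rw [Finset.disjoint_left]
    intro a h1 h2
    have := (Finset.mem_filter.1 (Finset.mem_filter.1 h1).1).2
    have := (Finset.mem_filter.1 (Finset.mem_filter.1 h2).1).2
    omega
  rw [freeF, Finset.card_union_of_disjoint hdisj]
  have h1 : G.card + ((smF n).filter (fun a => a ∈ T ∧ a ∉ G)).card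
      = ((smF n).filter (fun a => a ∈ T)).card := by
    rw [← Finset.card_union_of_disjoint (by
      rw [Finset.disjoint_left]
      intro a h1 h2
      exact (Finset.mem_filter.1 h2).2.2 h1)]
    congr 1
    ext a
    simp only [Finset.mem_union, Finset.mem_filter]
    constructor
    · rintro (h | h)
      · exact ⟨hGsm h, hGT a h⟩
      · exact ⟨h.1, h.2.1⟩
    · rintro ⟨h1, h2⟩
      by_cases hg : a ∈ G
      · exact Or.inl hg
      · exact Or.inr ⟨h1, h2, hg⟩
  have h2 : ((lgF n).filter (fun a => n < 2*a ∧ (n - a) ∉ T)).card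
      = ((smF n).filter (fun a => a ∉ T)).card := by
    apply Finset.card_bij' (fun a _ => n - a) (fun b _ => n - b)
    · intro a ha
      simp only [lgF, Finset.mem_filter, Finset.mem_Icc] at ha
      simp only [smF, Finset.mem_filter, Finset.mem_Icc]
      exact ⟨⟨⟨by omega, by omega⟩, by omega⟩, ha.2.2⟩
    · intro b hb
      simp only [smF, Finset.mem_filter, Finset.mem_Icc] at hb
      simp only [lgF, Finset.mem_filter, Finset.mem_Icc]
      refine ⟨⟨⟨by omega, by omega⟩, by omega⟩, by omega, ?_⟩
      have : n - (n - b) = b := by omega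
      rw [this]
      exact hb.2
    · intro a ha
      simp only [lgF, Finset.mem_filter, Finset.mem_Icc] at ha
      omega
    · intro b hb
      simp only [smF, Finset.mem_filter, Finset.mem_Icc] at hb
      omega
  have h3 : ((smF n).filter (fun a => a ∈ T)).card + ((smF n).filter (fun a => a ∉ T)).card
      = (smF n).card := Finset.card_filter_add_card_filter_not (fun a => a ∈ T)
  rw [smF_card hn] at h3
  omega

private lemma freeF_subset_Icc {n : ℕ} (G : Finset ℕ) : freeF n G ⊆ Finset.Icc 1 (n-1) := by
  intro a ha
  rcases Finset.mem_union.1 ha with h | h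
  · exact smF_subset_Icc (Finset.mem_of_mem_filter _ h)
  · exact lgF_subset_Icc (Finset.mem_of_mem_filter _ h)

private lemma freeF_disjoint {n : ℕ} {G : Finset ℕ} (hG : G ∈ gsetF n) :
    Disjoint G (freeF n G) := by
  rw [Finset.disjoint_left]
  intro a haG ha
  rcases Finset.mem_union.1 ha with h | h
  · exact (Finset.mem_filter.1 h).2.2 haG
  · have h1 := (Finset.mem_filter.1 (Finset.mem_filter.1 h).1).2
    have h2 := (Finset.mem_filter.1 (gsetF_subset hG haG)).2
    omega

private lemma fiber_eq {n : ℕ} (hn : 2 ≤ n) {G : Finset ℕ} (hG : G ∈ gsetF n)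
    (hnG : n ∉ AddSubmonoid.closure (G : Set ℕ)) :
    (Finset.Icc 1 (n-1)).powerset.filter
        (fun A => redF n A = G ∧ n ∉ AddSubmonoid.closure (A : Set ℕ))
      = (freeF n G).powerset.image (fun B => G ∪ B) := by
  set T := AddSubmonoid.closure (G : Set ℕ) with hT
  have hGsm := gsetF_subset hG
  ext A
  simp only [Finset.mem_filter, Finset.mem_powerset, Finset.mem_image]
  constructor
  · rintro ⟨hAN, hred, hnA⟩
    have hAN' := hAN
    have hclos : AddSubmonoid.closure ((A.filter (fun a => 2*a < n) : Finset ℕ) : Set ℕ) = T :=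
      (redF_eq_iff hAN' hG).1 hred
    have hGA : G ⊆ A := by
      rw [← hred]
      exact (redF_subset A).trans (Finset.filter_subset _ _)
    refine ⟨A \ G, ?_, ?_⟩
    · intro a ha
      obtain ⟨haA, haG⟩ := Finset.mem_sdiff.1 ha
      by_cases hsm : 2*a < n
      · apply Finset.mem_union_left
        refine Finset.mem_filter.2 ⟨Finset.mem_filter.2 ⟨hAN' haA, hsm⟩, ?_, haG⟩
        rw [← hT, ← hclos]
        exact AddSubmonoid.subset_closure (by
          simp only [Finset.coe_filter, Set.mem_setOf_eq]; exact ⟨haA, hsm⟩)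
      · apply Finset.mem_union_right
        have hcond : ¬ (2*a = n ∨ (n < 2*a ∧ (n - a) ∈ AddSubmonoid.closure
            ((A.filter (fun a => 2*a < n) : Finset ℕ) : Set ℕ))) := by
          intro hc
          exact hnA ((memA hn hAN').2 (Or.inr ⟨a, haA, hc⟩))
        push_neg at hcond
        refine Finset.mem_filter.2 ⟨Finset.mem_filter.2 ⟨hAN' haA, hsm⟩, by omega, ?_⟩
        rw [← hT, ← hclos]
        exact hcond.2 (by omega)
    · exact Finset.union_sdiff_of_subset hGA
  · rintro ⟨B, hB, rfl⟩
    have hB' := hB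
    have hsubN : G ∪ B ⊆ Finset.Icc 1 (n-1) := by
      apply Finset.union_subset (hGsm.trans smF_subset_Icc) (hB'.trans (freeF_subset_Icc G))
    have hfilter : (G ∪ B).filter (fun a => 2*a < n) = G ∪ B.filter (fun a => 2*a < n) := by
      rw [Finset.filter_union]
      congr 1
      apply Finset.filter_true_of_mem
      intro a ha
      exact (Finset.mem_filter.1 (hGsm ha)).2
    have hclos : AddSubmonoid.closure (((G ∪ B).filter (fun a => 2*a < n) : Finset ℕ) : Set ℕ) = T := by
      apply le_antisymm
      · rw [AddSubmonoid.closure_le, hfilter]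
        intro a ha
        rcases Finset.mem_union.1 (Finset.mem_coe.1 ha) with h | h
        · exact AddSubmonoid.subset_closure h
        · obtain ⟨hBa, hsm⟩ := Finset.mem_filter.1 h
          rcases Finset.mem_union.1 (hB' hBa) with h' | h'
          · exact (Finset.mem_filter.1 h').2.1
          · have := (Finset.mem_filter.1 h').2.1
            omega
      · apply AddSubmonoid.closure_mono
        rw [hfilter]
        intro x hx
        exact Finset.mem_coe.2 (Finset.mem_union_left _ (Finset.mem_coe.1 hx))
    refine ⟨hsubN, (redF_eq_iff hsubN hG).2 hclos, ?_⟩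
    intro hmem
    rcases (memA hn hsubN).1 hmem with h | ⟨a, haA, hc⟩
    · rw [hclos] at h
      exact hnG h
    · rw [hclos] at hc
      rcases Finset.mem_union.1 haA with h | h
      · have := (Finset.mem_filter.1 (hGsm h)).2
        rcases hc with h' | h' <;> omega
      · rcases Finset.mem_union.1 (hB' h) with h' | h'
        · have := (Finset.mem_filter.1 (Finset.mem_filter.1 h').1).2
          rcases hc with h'' | h'' <;> omega
        · obtain ⟨_, hlt, hnT⟩ := Finset.mem_filter.1 h'
          rcases hc with h'' | h''
          · omega
          · exact hnT h''.2

private lemma sum_pow_one (p : ℝ) (s : Finset ℕ) :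
    ∑ B ∈ s.powerset, p ^ B.card * (1-p) ^ (s.card - B.card) = 1 := by
  have h := Finset.prod_add (fun _ : ℕ => p) (fun _ : ℕ => (1 : ℝ) - p) s
  simp only [add_sub_cancel, Finset.prod_const, one_pow] at h
  have h2 : ∑ B ∈ s.powerset, p ^ B.card * (1-p) ^ (s.card - B.card)
      = ∑ B ∈ s.powerset, p ^ B.card * (1-p) ^ ((s \ B).card) := by
    apply Finset.sum_congr rfl
    intro B hB
    rw [Finset.card_sdiff_of_subset (Finset.mem_powerset.1 hB)]
  rw [h2, ← h]


private lemma hvec_eq {n : ℕ} (hn : 2 ≤ n) (i : ℕ) :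
    hvec n i = ((gsetF n).filter
      (fun G : Finset ℕ => n ∉ AddSubmonoid.closure (G : Set ℕ) ∧ G.card = i)).card := by
  classical
  have himg : {T : AddSubmonoid ℕ | n ∉ T ∧ embDim T = i ∧ ∀ a ∈ minGens T, 2 * a < n}
      = (fun G : Finset ℕ => AddSubmonoid.closure (G : Set ℕ)) ''
        ↑((gsetF n).filter
          (fun G : Finset ℕ => n ∉ AddSubmonoid.closure (G : Set ℕ) ∧ G.card = i)) := by
    ext T
    simp only [Set.mem_setOf_eq, Set.mem_image, Finset.mem_coe, Finset.mem_filter]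
    constructor
    · rintro ⟨hnT, hdim, hsmall⟩
      set G := (smF n).filter (fun a => a ∈ minGens T) with hGdef
      have hGcoe : (G : Set ℕ) = minGens T := by
        ext a
        simp only [hGdef, Finset.coe_filter, Set.mem_setOf_eq, smF, Finset.mem_filter,
          Finset.mem_Icc]
        constructor
        · tauto
        · intro ha
          have h2a := hsmall a ha
          have ha0 := ha.2.1
          exact ⟨⟨by omega, by omega⟩, ha⟩
      have hTG : AddSubmonoid.closure (G : Set ℕ) = T := by rw [hGcoe, closure_minGens]
      have hGsm : G ⊆ smF n := Finset.filter_subset _ _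
      have h0G : 0 ∉ G := zero_not_mem_of_subset_Icc (hGsm.trans smF_subset_Icc)
      have hGgset : G ∈ gsetF n := by
        refine Finset.mem_filter.2 ⟨Finset.mem_powerset.2 hGsm, fun a haG => ?_⟩
        have hmg : a ∈ minGens (AddSubmonoid.closure (G : Set ℕ)) := by
          rw [hGcoe, closure_minGens]
          exact (Finset.mem_filter.1 haG).2
        rw [minGens_closure_finset h0G] at hmg
        exact hmg.2
      have hcard : G.card = i := by
        rw [← hdim, embDim, ← hGcoe, Set.ncard_coe_finset]
      exact ⟨G, ⟨hGgset, by rw [hTG]; exact hnT, hcard⟩, hTG⟩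
    · rintro ⟨G, ⟨hGg, hnG, hcard⟩, rfl⟩
      have hmg := gsetF_minGens hGg
      refine ⟨hnG, ?_, ?_⟩
      · rw [embDim, hmg, Set.ncard_coe_finset, hcard]
      · intro a ha
        rw [hmg] at ha
        exact (Finset.mem_filter.1 (gsetF_subset hGg ha)).2
  have hinj : Set.InjOn (fun G : Finset ℕ => AddSubmonoid.closure (G : Set ℕ))
      ↑((gsetF n).filter
        (fun G : Finset ℕ => n ∉ AddSubmonoid.closure (G : Set ℕ) ∧ G.card = i)) := by
    intro G1 h1 G2 h2 heq
    have e1 := gsetF_minGens (Finset.mem_filter.1 (Finset.mem_coe.1 h1)).1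
    have e2 := gsetF_minGens (Finset.mem_filter.1 (Finset.mem_coe.1 h2)).1
    apply Finset.coe_injective
    rw [← e1, ← e2]
    exact congrArg minGens heq
  rw [hvec, himg, Set.ncard_image_of_injOn hinj, Set.ncard_coe_finset]

theorem statement10 (n : ℕ) (hn : 2 ≤ n) (p : ℝ) :
    (∑ A ∈ (Finset.Icc 1 (n - 1)).powerset,
        if n ∉ AddSubmonoid.closure (A : Set ℕ) then
          p ^ A.card * (1 - p) ^ (n - 1 - A.card) else 0)
      = (1 - p) ^ (n / 2) * ∑' i : ℕ, (hvec n i : ℝ) * p ^ i := by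
  classical
  have hmaps : ∀ A ∈ (Finset.Icc 1 (n-1)).powerset, redF n A ∈ gsetF n := fun A hA =>
    redF_mem_gsetF (Finset.mem_powerset.1 hA)
  rw [← Finset.sum_fiberwise_of_maps_to hmaps]
  have hfib : ∀ G ∈ gsetF n,
      (∑ A ∈ (Finset.Icc 1 (n-1)).powerset.filter (fun A => redF n A = G),
        if n ∉ AddSubmonoid.closure (A : Set ℕ) then
          p ^ A.card * (1 - p) ^ (n - 1 - A.card) else 0)
      = if n ∉ AddSubmonoid.closure (G : Set ℕ) then (1-p)^(n/2) * p^G.card else 0 := by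
    intro G hG
    by_cases hnG : n ∈ AddSubmonoid.closure (G : Set ℕ)
    · rw [if_neg (by simpa using hnG)]
      apply Finset.sum_eq_zero
      intro A hA
      obtain ⟨hAp, hred⟩ := Finset.mem_filter.1 hA
      have hA' := Finset.mem_powerset.1 hAp
      have hclos := (redF_eq_iff hA' hG).1 hred
      rw [if_neg]
      simp only [not_not]
      have hmem : n ∈ AddSubmonoid.closure ((A.filter (fun a => 2*a < n) : Finset ℕ) : Set ℕ) := by
        rw [hclos]; exact hnG
      exact AddSubmonoid.closure_mono (by exact_mod_cast Finset.filter_subset _ _) hmem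
    · rw [if_pos hnG]
      rw [← Finset.sum_filter, Finset.filter_filter, fiber_eq hn hG hnG]
      rw [Finset.sum_image (by
        intro B1 h1 B2 h2 heq
        have d1 : Disjoint G B1 :=
          Finset.disjoint_of_subset_right (Finset.mem_powerset.1 h1) (freeF_disjoint hG)
        have d2 : Disjoint G B2 :=
          Finset.disjoint_of_subset_right (Finset.mem_powerset.1 h2) (freeF_disjoint hG)
        rw [← Finset.union_sdiff_cancel_left d1, ← Finset.union_sdiff_cancel_left d2, show G ∪ B1 = G ∪ B2 from heq])]
      have hkey := card_free hn hG
      calc ∑ B ∈ (freeF n G).powerset, p ^ (G ∪ B).card * (1-p) ^ (n - 1 - (G ∪ B).card)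
          = ∑ B ∈ (freeF n G).powerset,
              ((1-p)^(n/2) * p^G.card) * (p ^ B.card * (1-p) ^ ((freeF n G).card - B.card)) := by
            apply Finset.sum_congr rfl
            intro B hB
            have hB' := Finset.mem_powerset.1 hB
            have hBc : B.card ≤ (freeF n G).card := Finset.card_le_card hB'
            rw [Finset.card_union_of_disjoint
              (Finset.disjoint_of_subset_right hB' (freeF_disjoint hG))]
            have hexp : n - 1 - (G.card + B.card) = n/2 + ((freeF n G).card - B.card) := by omega
            rw [hexp, pow_add, pow_add]
            ring
        _ = (1-p)^(n/2) * p^G.card := by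
            rw [← Finset.mul_sum, sum_pow_one, mul_one]
  rw [Finset.sum_congr rfl hfib, ← Finset.sum_filter]
  have htsum : ∑' i : ℕ, (hvec n i : ℝ) * p ^ i
      = ∑ G ∈ (gsetF n).filter
          (fun G : Finset ℕ => n ∉ AddSubmonoid.closure (G : Set ℕ)), p ^ G.card := by
    have hzero : ∀ i ∉ Finset.range ((n-1)/2 + 1), ((hvec n i : ℝ) * p ^ i) = 0 := by
      intro i hi
      rw [Finset.mem_range, not_lt] at hi
      have hv0 : hvec n i = 0 := by
        rw [hvec_eq hn i]
        apply Finset.card_eq_zero.2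
        rw [Finset.filter_eq_empty_iff]
        intro G hG
        rintro ⟨_, hcard⟩
        have := Finset.card_le_card (gsetF_subset hG)
        rw [smF_card hn] at this
        omega
      rw [hv0]
      simp
    rw [tsum_eq_sum hzero]
    have hmaps2 : ∀ G ∈ (gsetF n).filter
        (fun G : Finset ℕ => n ∉ AddSubmonoid.closure (G : Set ℕ)),
        G.card ∈ Finset.range ((n-1)/2 + 1) := by
      intro G hG
      rw [Finset.mem_range]
      have := Finset.card_le_card (gsetF_subset (Finset.mem_filter.1 hG).1)
      rw [smF_card hn] at this
      omega
    rw [← Finset.sum_fiberwise_of_maps_to hmaps2 (fun G => p ^ G.card)]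
    apply Finset.sum_congr rfl
    intro i _
    rw [hvec_eq hn i, Finset.filter_filter]
    rw [Finset.sum_congr rfl (fun G hG => by rw [(Finset.mem_filter.1 hG).2.2])]
    rw [Finset.sum_const, nsmul_eq_mul]
  rw [htsum, Finset.mul_sum]
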